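/- If 2 < p < q < 2N/(N-2), then for every u ∈ H^1(ℝ^N)\{0} with A(u)>0 and every μ > 0, the fibering map t ↦ λ^S_μ(tu) = (1/Q(u))·(t^{4/(N-2)} c_N^S T(u)^{N/(N-2)} - (2μ/p) t^{p-2} A(u) + (2/q) t^{q-2} B(u)) on (0,∞) has a unique critical point t(u) > 0, which is a global minimum with λ^S_μ(t(u)u) < 0. -/

import Mathlib

theorem key (a b c C1 C2 C3 : ℝ) (hb : 0 < b) (hbc : b < c) (hca : c < a)
    (hC1 : 0 < C1) (hC2 : 0 < C2) (hC3 : 0 < C3)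
    (f : ℝ → ℝ) (hf : f = fun t : ℝ => C1 * t ^ a - C2 * t ^ b + C3 * t ^ c) :
    ∃ t0 : ℝ, 0 < t0 ∧ (∀ t : ℝ, 0 < t → (deriv f t = 0 ↔ t = t0)) ∧
      (∀ t : ℝ, 0 < t → f t0 ≤ f t) ∧ f t0 < 0 := by
  have hc : 0 < c := hb.trans hbc
  have ha : 0 < a := hc.trans hca
  set g : ℝ → ℝ := fun t => a * C1 * t ^ (a - b) + c * C3 * t ^ (c - b) with hg
  -- derivative of f at positive t
  have hderiv : ∀ t : ℝ, 0 < t → HasDerivAt f (t ^ (b-1) * (g t - b * C2)) t := by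
    intro t ht
    have h1 : HasDerivAt (fun x : ℝ => C1 * x ^ a) (C1 * (a * t ^ (a-1))) t :=
      (Real.hasDerivAt_rpow_const (Or.inl ht.ne')).const_mul C1
    have h2 : HasDerivAt (fun x : ℝ => C2 * x ^ b) (C2 * (b * t ^ (b-1))) t :=
      (Real.hasDerivAt_rpow_const (Or.inl ht.ne')).const_mul C2
    have h3 : HasDerivAt (fun x : ℝ => C3 * x ^ c) (C3 * (c * t ^ (c-1))) t :=
      (Real.hasDerivAt_rpow_const (Or.inl ht.ne')).const_mul C3
    have h := (h1.sub h2).add h3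
    rw [hf]
    convert h using 1
    · rfl
    · rfl
    · rfl
    have ea : t ^ (a-1) = t ^ (b-1) * t ^ (a-b) := by
      rw [← Real.rpow_add ht]; ring_nf
    have ec : t ^ (c-1) = t ^ (b-1) * t ^ (c-b) := by
      rw [← Real.rpow_add ht]; ring_nf
    rw [hg]; simp only []
    rw [ea, ec]; ring
  -- g strictly monotone on Ici 0
  have hgmono : StrictMonoOn g (Set.Ici 0) := by
    intro x hx y _ hxy
    have h1 : x ^ (a-b) < y ^ (a-b) := Real.rpow_lt_rpow hx hxy (by linarith)
    have h2 : x ^ (c-b) < y ^ (c-b) := Real.rpow_lt_rpow hx hxy (by linarith)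
    have := mul_pos ha hC1
    have := mul_pos hc hC3
    simp only [hg]
    nlinarith
  -- continuity of g on Ici 0
  have hgcont : ContinuousOn g (Set.Ici 0) := by
    apply ContinuousOn.add
    · exact continuousOn_const.mul (fun x _ =>
        (Real.continuousAt_rpow_const x (a-b) (Or.inr (by linarith))).continuousWithinAt)
    · exact continuousOn_const.mul (fun x _ =>
        (Real.continuousAt_rpow_const x (c-b) (Or.inr (by linarith))).continuousWithinAt)
  -- find a root of g t = b*C2
  have hg0 : g 0 = 0 := by
    simp only [hg]
    rw [Real.zero_rpow (by linarith), Real.zero_rpow (by linarith)]; ring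
  set M : ℝ := b * C2 / (a * C1) + 1 with hM
  have hMpos : 0 < M := by positivity
  set big : ℝ := M ^ (a - b)⁻¹ with hbig
  have hbigpos : 0 < big := Real.rpow_pos_of_pos hMpos _
  have hgbig : b * C2 < g big := by
    have h1 : big ^ (a - b) = M := by
      rw [hbig, ← Real.rpow_mul hMpos.le,
        inv_mul_cancel₀ (by linarith : a - b ≠ 0), Real.rpow_one]
    have h2 : 0 < big ^ (c - b) := Real.rpow_pos_of_pos hbigpos _
    simp only [hg]
    rw [h1]
    have : a * C1 * M = b * C2 + a * C1 := by
      rw [hM]; field_simp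
    nlinarith [mul_pos hc hC3]
  obtain ⟨t0, ht0mem, ht0⟩ : ∃ t0 ∈ Set.Icc (0:ℝ) big, g t0 = b * C2 := by
    have := intermediate_value_Icc hbigpos.le (hgcont.mono (by
      intro x hx; exact hx.1))
    have hmem : b * C2 ∈ Set.Icc (g 0) (g big) := by
      constructor
      · rw [hg0]; positivity
      · exact hgbig.le
    obtain ⟨t0, h1, h2⟩ := this hmem
    exact ⟨t0, h1, h2⟩
  have ht0pos : 0 < t0 := by
    rcases ht0mem.1.lt_or_eq with h | h
    · exact h
    · exfalso; rw [← h, hg0] at ht0; nlinarith [mul_pos hb hC2]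
  refine ⟨t0, ht0pos, ?_, ?_, ?_⟩
  · -- uniqueness of critical point
    intro t ht
    have hd : deriv f t = t ^ (b-1) * (g t - b * C2) := (hderiv t ht).deriv
    rw [hd]
    constructor
    · intro h
      have htne : t ^ (b-1) ≠ 0 := (Real.rpow_pos_of_pos ht _).ne'
      have : g t - b * C2 = 0 := by
        rcases mul_eq_zero.1 h with h' | h'
        · exact absurd h' htne
        · exact h'
      have hgt : g t = g t0 := by rw [ht0]; linarith
      exact hgmono.injOn ht.le (Set.mem_Ici.2 ht0pos.le) hgt
    · intro h
      rw [h, ht0]; ring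
  · -- global minimum
    intro t ht
    rcases lt_trichotomy t t0 with h | h | h
    · -- antitone on Ioc 0 t0
      have hanti : StrictAntiOn f (Set.Ioc 0 t0) := by
        apply strictAntiOn_of_deriv_neg (convex_Ioc 0 t0)
        · intro x hx
          exact ((hderiv x hx.1).continuousAt).continuousWithinAt
        · intro x hx
          rw [interior_Ioc] at hx
          rw [(hderiv x hx.1).deriv]
          have hgx : g x < g t0 := hgmono (Set.mem_Ici.2 hx.1.le) (Set.mem_Ici.2 ht0pos.le) hx.2
          rw [ht0] at hgx
          have := Real.rpow_pos_of_pos hx.1 (b-1)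
          nlinarith
      exact (hanti ⟨ht, h.le⟩ ⟨ht0pos, le_refl _⟩ h).le
    · rw [h]
    · -- monotone on Ici t0
      have hmono : StrictMonoOn f (Set.Ici t0) := by
        apply strictMonoOn_of_deriv_pos (convex_Ici t0)
        · intro x hx
          exact ((hderiv x (ht0pos.trans_le hx)).continuousAt).continuousWithinAt
        · intro x hx
          rw [interior_Ici] at hx
          have hxpos : 0 < x := ht0pos.trans hx
          rw [(hderiv x hxpos).deriv]
          have hgx : g t0 < g x := hgmono (Set.mem_Ici.2 ht0pos.le) (Set.mem_Ici.2 hxpos.le) hx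
          rw [ht0] at hgx
          have := Real.rpow_pos_of_pos hxpos (b-1)
          nlinarith
      exact (hmono (Set.mem_Ici.2 (le_refl _)) (Set.mem_Ici.2 h.le) h).le
  · -- f t0 < 0
    set X : ℝ := t0 ^ (a - b) with hX
    set Y : ℝ := t0 ^ (c - b) with hY
    set P : ℝ := t0 ^ b with hP
    have hXpos : 0 < X := Real.rpow_pos_of_pos ht0pos _
    have hYpos : 0 < Y := Real.rpow_pos_of_pos ht0pos _
    have hPpos : 0 < P := Real.rpow_pos_of_pos ht0pos _
    have ea : t0 ^ a = P * X := by
      rw [hP, hX, ← Real.rpow_add ht0pos]; ring_nf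
    have ec : t0 ^ c = P * Y := by
      rw [hP, hY, ← Real.rpow_add ht0pos]; ring_nf
    have hroot : a * C1 * X + c * C3 * Y = b * C2 := ht0
    rw [hf]; simp only []
    rw [ea, ec]
    nlinarith [mul_pos (mul_pos hC1 hXpos) hPpos, mul_pos (mul_pos hC3 hYpos) hPpos,
      mul_pos hPpos hXpos, mul_pos hPpos hYpos]

/-- for 2 < p < q < 2N/(N-2), μ > 0, the fibering map
t ↦ λ^S_μ(tu) has a unique critical point on (0,∞), which is a global
minimum with negative value. -/
theorem stmt2 (N : ℕ) (hN : 3 ≤ N) (S μ p q T A B Q : ℝ)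
    (hS : 0 < S) (hp : 2 < p) (hpq : p < q) (hq' : q < 2 * (N : ℝ) / ((N : ℝ) - 2))
    (hμ : 0 < μ) (hT : 0 < T) (hA : 0 < A) (hB : 0 < B) (hQ : 0 < Q)
    (c : ℝ)
    (hc : c = ((N : ℝ) - 2) / ((N : ℝ) ^ ((N : ℝ) / ((N : ℝ) - 2)) * S ^ ((2 : ℝ) / ((N : ℝ) - 2))))
    (f : ℝ → ℝ)
    (hf : f = fun t : ℝ => (1 / Q) *
        (t ^ ((4 : ℝ) / ((N : ℝ) - 2)) * c * T ^ ((N : ℝ) / ((N : ℝ) - 2))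
          - (2 * μ / p) * t ^ (p - 2) * A + (2 / q) * t ^ (q - 2) * B)) :
    ∃ t0 : ℝ, 0 < t0 ∧ (∀ t : ℝ, 0 < t → (deriv f t = 0 ↔ t = t0)) ∧
      (∀ t : ℝ, 0 < t → f t0 ≤ f t) ∧ f t0 < 0 := by
  have hN3 : (3 : ℝ) ≤ (N : ℝ) := by exact_mod_cast hN
  have hN2 : (0 : ℝ) < (N : ℝ) - 2 := by linarith
  have hNpos : (0 : ℝ) < (N : ℝ) := by linarith
  have hcpos : 0 < c := by
    rw [hc]
    exact div_pos hN2 (mul_pos (Real.rpow_pos_of_pos hNpos _) (Real.rpow_pos_of_pos hS _))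
  have hca : q - 2 < (4 : ℝ) / ((N : ℝ) - 2) := by
    have he : 2 * (N : ℝ) / ((N : ℝ) - 2) - 2 = 4 / ((N : ℝ) - 2) := by
      field_simp; ring
    linarith [hq']
  have hppos : (0:ℝ) < p := by linarith
  have hqpos : (0:ℝ) < q := by linarith
  have hf' : f = fun t : ℝ => (c * T ^ ((N : ℝ) / ((N : ℝ) - 2)) / Q) * t ^ ((4 : ℝ) / ((N : ℝ) - 2))
      - (2 * μ * A / (p * Q)) * t ^ (p - 2) + (2 * B / (q * Q)) * t ^ (q - 2) := by
    rw [hf]; funext t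
    field_simp
  exact key ((4 : ℝ) / ((N : ℝ) - 2)) (p - 2) (q - 2) _ _ _
    (by linarith) (by linarith) hca
    (div_pos (mul_pos hcpos (Real.rpow_pos_of_pos hT _)) hQ)
    (div_pos (by positivity) (by positivity))
    (div_pos (by positivity) (by positivity))
    f hf'
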